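/- arXiv:math/0702120 — 2 statements merged into one kernel-verified Lean document; each statement's English description precedes it below -/
import Mathlib

section
/- (Theorem 3, representer theorem for the discretized problem) Let H be a real RKHS of functions on [0,1] with reproducing kernel k, let t_1,…,t_T ∈ [0,1], let y_i ∈ H for i = 1,…,n, let A = (a_{ij}) be an n×n real positive definite matrix, and let λ > 0. Then any minimizer (α_1,…,α_n) ∈ H^n of the objective ∑_{i=1}^n ∑_{l=1}^T (y_i(t_l) − ∑_{j=1}^n a_{ij} α_j(t_l))² + λ ∑_{i,j} a_{ij} ⟪α_i, α_j⟫_H satisfies α_i ∈ span{k(t_1,·),…,k(t_T,·)} for every i; that is, each α_i has the form α_i = ∑_{l=1}^T b^i_l k(t_l,·) with real coefficients b^i_l. -/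
open scoped RealInnerProductSpace

/-- Theorem 3, representer theorem for the discretized problem:
Let `Hk` be a real RKHS of functions on `[0,1]` — a Hilbert space whose elements are
real-valued functions on `[0,1]` (realized by the evaluation map `ev`), in which every
point evaluation `f ↦ f(t) = ev f t` is continuous (and linear), with reproducing
kernel sections `kfun t = k(t,·) ∈ Hk` satisfying `⟪k(t,·), f⟫ = f(t)`.
Let `t₁,…,t_T ∈ [0,1]`, `y₁,…,yₙ ∈ Hk`, `A = (aᵢⱼ)` an `n×n` real (symmetric)
positive definite matrix and `λ > 0`.  Then any minimizer `(α₁,…,αₙ) ∈ Hkⁿ` of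
`∑ᵢ∑ₗ (yᵢ(tₗ) − ∑ⱼ aᵢⱼ αⱼ(tₗ))² + λ ∑ᵢⱼ aᵢⱼ ⟪αᵢ, αⱼ⟫`
satisfies `αᵢ ∈ span{k(t₁,·),…,k(t_T,·)}` for every `i`, i.e. each `αᵢ` is of the
form `∑ₗ bᵢₗ k(tₗ,·)` with real coefficients. -/
theorem statement10 {Hk : Type*}
    [NormedAddCommGroup Hk] [InnerProductSpace ℝ Hk] [CompleteSpace Hk]
    (ev : Hk → Set.Icc (0:ℝ) 1 → ℝ)
    (L : Set.Icc (0:ℝ) 1 → Hk →L[ℝ] ℝ)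
    (hL : ∀ (t : Set.Icc (0:ℝ) 1) (f : Hk), L t f = ev f t)
    (kfun : Set.Icc (0:ℝ) 1 → Hk)
    (hk : ∀ (t : Set.Icc (0:ℝ) 1) (f : Hk), ⟪kfun t, f⟫ = ev f t)
    (n T : ℕ) (t : Fin T → Set.Icc (0:ℝ) 1) (y : Fin n → Hk)
    (A : Matrix (Fin n) (Fin n) ℝ) (hA : A.PosDef)
    (lam : ℝ) (hlam : 0 < lam)
    (α : Fin n → Hk)
    (hmin : ∀ α' : Fin n → Hk,
      (∑ i, ∑ l, (ev (y i) (t l) - ∑ j, A i j * ev (α j) (t l)) ^ 2)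
          + lam * ∑ i, ∑ j, A i j * ⟪α i, α j⟫ ≤
        (∑ i, ∑ l, (ev (y i) (t l) - ∑ j, A i j * ev (α' j) (t l)) ^ 2)
          + lam * ∑ i, ∑ j, A i j * ⟪α' i, α' j⟫) :
    ∀ i, α i ∈ Submodule.span ℝ (Set.range fun l : Fin T => kfun (t l)) := by
  set V : Submodule ℝ Hk := Submodule.span ℝ (Set.range fun l : Fin T => kfun (t l)) with hVdef
  have finV : FiniteDimensional ℝ V := FiniteDimensional.span_of_finite ℝ (Set.finite_range _)
  have hsym : ∀ p q, A q p = A p q := fun p q => by simpa using (hA.isHermitian.apply q p).symm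
  have hdiag : ∀ i, 0 < A i i := by
    intro i
    have h := hA.dotProduct_mulVec_pos (x := Pi.single i 1) (by simp [Pi.single_eq_same, Function.ne_iff])
    simpa [dotProduct, Matrix.mulVec, Pi.single_apply, Finset.sum_ite_eq'] using h
  have hwV : ∀ w, w ∈ Vᗮ → ∀ l, ⟪kfun (t l), w⟫ = 0 := by
    intro w hw l
    exact (Submodule.mem_orthogonal V w).mp hw _ (Submodule.subset_span ⟨l, rfl⟩)
  -- Step 1: each β i := ∑ j, A i j • α j lies in V
  have hbeta : ∀ i, (∑ j, A i j • α j) ∈ V := by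
    intro i
    rw [← Submodule.orthogonal_orthogonal V]
    rw [Submodule.mem_orthogonal]
    intro w hw
    set c : ℝ := ∑ j, A i j * ⟪w, α j⟫ with hc
    set d : ℝ := A i i * ‖w‖ ^ 2 with hd
    have key : ∀ s : ℝ, 0 ≤ d * (s * s) + (2 * c) * s + 0 := by
      intro s
      have h := hmin (fun p => α p + if p = i then s • w else 0)
      simp only [← hk] at h
      have hev' : ∀ (l : Fin T) (j : Fin n),
          ⟪kfun (t l), α j + (if j = i then s • w else 0)⟫ = ⟪kfun (t l), α j⟫ := by
        intro l j
        by_cases hj : j = i <;>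
          simp [hj, inner_add_right, real_inner_smul_right, hwV w hw l]
      have hinner' : ∀ p q : Fin n,
          A p q * ⟪α p + (if p = i then s • w else 0), α q + (if q = i then s • w else 0)⟫ =
          A p q * ⟪α p, α q⟫ + (if p = i then A i q * (s * ⟪w, α q⟫) else 0)
            + (if q = i then A p i * (s * ⟪α p, w⟫) else 0)
            + (if p = i then (if q = i then A i i * (s * s * ⟪w, w⟫) else 0) else 0) := by
        intro p q
        by_cases hp : p = i <;> by_cases hq : q = i <;>
          simp [hp, hq, inner_add_left, inner_add_right, real_inner_smul_left,
            real_inner_smul_right, -inner_self_eq_norm_sq_to_K] <;> ring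
      have pull : ∀ (P : Prop) [Decidable P] (f : Fin n → ℝ),
          (∑ x, if P then f x else 0) = if P then ∑ x, f x else 0 := by
        intro P _ f; split <;> simp
      simp only [hev', hinner'] at h
      simp only [Finset.sum_add_distrib, Finset.sum_ite_eq', Finset.mem_univ, if_true, pull] at h
      have e1 : ∑ q, A i q * (s * ⟪w, α q⟫) = s * c := by
        rw [hc, Finset.mul_sum]
        exact Finset.sum_congr rfl fun q _ => by ring
      have e2 : ∑ p, A p i * (s * ⟪α p, w⟫) = s * c := by
        rw [hc, Finset.mul_sum]
        refine Finset.sum_congr rfl fun p _ => ?_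
        rw [hsym p i, real_inner_comm]
        ring
      rw [e1, e2, real_inner_self_eq_norm_sq] at h
      have h3 : lam * 0 ≤ lam * (s * c + s * c + A i i * (s * s * ‖w‖ ^ 2)) := by
        have h4 : lam * (∑ p, ∑ q, A p q * ⟪α p, α q⟫) ≤
            lam * ((∑ p, ∑ q, A p q * ⟪α p, α q⟫) + s * c + s * c
              + A i i * (s * s * ‖w‖ ^ 2)) := by linarith
        simp only [mul_add, mul_zero] at h4 ⊢
        linarith
      have h2 : 0 ≤ s * c + s * c + A i i * (s * s * ‖w‖ ^ 2) :=
        le_of_mul_le_mul_left h3 hlam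
      rw [hd]
      ring_nf
      ring_nf at h2
      linarith
    have hdisc := discrim_le_zero key
    rw [discrim] at hdisc
    have hc0 : c = 0 := by nlinarith [sq_nonneg c]
    calc ⟪w, ∑ j, A i j • α j⟫ = ∑ j, A i j * ⟪w, α j⟫ := by
          rw [inner_sum]
          exact Finset.sum_congr rfl fun j _ => real_inner_smul_right _ _ _
      _ = 0 := hc0
  -- Step 2: invert A
  intro i
  have hdet : IsUnit A.det := isUnit_iff_ne_zero.mpr (ne_of_gt hA.det_pos)
  have hinv : A⁻¹ * A = 1 := Matrix.nonsing_inv_mul A hdet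
  have hrepr : α i = ∑ j, (A⁻¹ i j) • (∑ k, A j k • α k) := by
    have : ∑ j, (A⁻¹ i j) • (∑ k, A j k • α k) = ∑ k, ((A⁻¹ * A) i k) • α k := by
      simp only [Finset.smul_sum, smul_smul]
      rw [Finset.sum_comm]
      refine Finset.sum_congr rfl fun k _ => ?_
      rw [← Finset.sum_smul, Matrix.mul_apply]
    rw [this, hinv]
    simp [Matrix.one_apply]
  rw [hrepr]
  exact Submodule.sum_mem _ fun j _ => Submodule.smul_mem _ _ (hbeta j)
end

section
/- Let A be an n×n and K a T×T real symmetric positive semidefinite matrix, λ ≥ 0, and Y an n×T real matrix. If an n×T real matrix B satisfies (A^T A) B (K K^T) + λ A B K = A Y K, then B minimizes the objective f(B') = Tr((Y − A B' K)(Y − A B' K)^T) + λ Tr(A B' K B'^T) over all n×T real matrices B'. -/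
open Matrix

lemma tr_mul_tr_self_nonneg {m p : ℕ} (M : Matrix (Fin m) (Fin p) ℝ) :
    0 ≤ (M * Mᵀ).trace := by
  simp only [Matrix.trace, Matrix.diag, Matrix.mul_apply, Matrix.transpose_apply]
  exact Finset.sum_nonneg fun i _ => Finset.sum_nonneg fun j _ => mul_self_nonneg _

/-- Let `A` be `n×n` and `K` `T×T` real symmetric positive semidefinite,
`λ ≥ 0`, and `Y` an `n×T` real matrix.  If an `n×T` matrix `B` satisfies the normal
equation `(AᵀA) B (KKᵀ) + λ A B K = A Y K`, then `B` minimizes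
`f(B') = Tr((Y − A B' K)(Y − A B' K)ᵀ) + λ Tr(A B' K B'ᵀ)` over all `n×T` real
matrices `B'`. -/
theorem statement14 {n T : ℕ}
    (A : Matrix (Fin n) (Fin n) ℝ) (hA : A.PosSemidef)
    (K : Matrix (Fin T) (Fin T) ℝ) (hK : K.PosSemidef)
    (lam : ℝ) (hlam : 0 ≤ lam)
    (Y B : Matrix (Fin n) (Fin T) ℝ)
    (hB : Aᵀ * A * B * (K * Kᵀ) + lam • (A * B * K) = A * Y * K) :
    ∀ B' : Matrix (Fin n) (Fin T) ℝ,
      ((Y - A * B * K) * (Y - A * B * K)ᵀ).trace + lam * (A * B * K * Bᵀ).trace ≤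
      ((Y - A * B' * K) * (Y - A * B' * K)ᵀ).trace + lam * (A * B' * K * B'ᵀ).trace := by
  intro B'
  have hAs : Aᵀ = A := by
    have := hA.isHermitian.eq
    simpa [Matrix.conjTranspose_eq_transpose_of_trivial] using this
  have hKs : Kᵀ = K := by
    have := hK.isHermitian.eq
    simpa [Matrix.conjTranspose_eq_transpose_of_trivial] using this
  set D : Matrix (Fin n) (Fin T) ℝ := B' - B with hD
  have hB'eq : B' = B + D := by simp [hD]
  set R : Matrix (Fin n) (Fin T) ℝ := Y - A * B * K with hR
  set M : Matrix (Fin n) (Fin T) ℝ := A * D * K with hM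
  -- normal equation consequence
  have hARK : A * R * K = lam • (A * B * K) := by
    rw [hR]
    have h1 : Aᵀ * A * B * (K * Kᵀ) = A * (A * B * K) * K := by
      rw [hAs, hKs]; simp only [Matrix.mul_assoc]
    have h2 : A * (Y - A * B * K) * K = A * Y * K - A * (A * B * K) * K := by
      rw [Matrix.mul_sub, Matrix.sub_mul]
    rw [h2, ← hB, h1]; abel
  -- cross term
  have hcross : (M * Rᵀ).trace = lam * (A * D * K * Bᵀ).trace := by
    have hKRA : K * Rᵀ * A = lam • (K * Bᵀ * A) := by
      have := congrArg Matrix.transpose hARK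
      simp only [Matrix.transpose_mul, Matrix.transpose_smul, hAs, hKs, ← Matrix.mul_assoc] at this
      exact this
    calc (M * Rᵀ).trace = ((A * D) * (K * Rᵀ)).trace := by rw [hM]; simp only [Matrix.mul_assoc]
      _ = ((K * Rᵀ) * (A * D)).trace := Matrix.trace_mul_comm _ _
      _ = ((K * Rᵀ * A) * D).trace := by simp only [Matrix.mul_assoc]
      _ = ((lam • (K * Bᵀ * A)) * D).trace := by rw [hKRA]
      _ = lam * ((K * Bᵀ) * (A * D)).trace := by
            rw [Matrix.smul_mul, Matrix.trace_smul, smul_eq_mul]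
            simp only [Matrix.mul_assoc]
      _ = lam * ((A * D) * (K * Bᵀ)).trace := by rw [Matrix.trace_mul_comm]
      _ = lam * (A * D * K * Bᵀ).trace := by simp only [Matrix.mul_assoc]
  have hsym : (R * Mᵀ).trace = (M * Rᵀ).trace := by
    rw [← Matrix.trace_transpose (R * Mᵀ), Matrix.transpose_mul, Matrix.transpose_transpose]
  have habd : (A * B * K * Dᵀ).trace = (A * D * K * Bᵀ).trace := by
    calc (A * B * K * Dᵀ).trace = ((A * B * K * Dᵀ)ᵀ).trace := (Matrix.trace_transpose _).symm
      _ = (D * (K * Bᵀ * A)).trace := by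
            simp only [Matrix.transpose_mul, Matrix.transpose_transpose, hAs, hKs, Matrix.mul_assoc]
      _ = ((K * Bᵀ * A) * D).trace := Matrix.trace_mul_comm _ _
      _ = ((A * D) * (K * Bᵀ)).trace := by
            rw [show (K * Bᵀ * A) * D = (K * Bᵀ) * (A * D) by simp only [Matrix.mul_assoc],
              Matrix.trace_mul_comm]
      _ = (A * D * K * Bᵀ).trace := by simp only [Matrix.mul_assoc]
  -- nonnegativity of quadratic parts
  have h1 : 0 ≤ (M * Mᵀ).trace := tr_mul_tr_self_nonneg M
  have h2 : 0 ≤ (A * D * K * Dᵀ).trace := by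
    open scoped MatrixOrder Matrix.Norms.L2Operator in
    obtain ⟨C, hC⟩ := CStarAlgebra.nonneg_iff_eq_star_mul_self.mp hA.nonneg
    open scoped MatrixOrder Matrix.Norms.L2Operator in
    obtain ⟨E, hE⟩ := CStarAlgebra.nonneg_iff_eq_star_mul_self.mp hK.nonneg
    rw [Matrix.star_eq_conjTranspose, Matrix.conjTranspose_eq_transpose_of_trivial] at hC hE
    have : (A * D * K * Dᵀ).trace = ((C * D * Eᵀ) * (C * D * Eᵀ)ᵀ).trace := by
      rw [hC, hE,
        show Cᵀ * C * D * (Eᵀ * E) * Dᵀ = Cᵀ * (C * D * (Eᵀ * (E * Dᵀ))) by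
          simp only [Matrix.mul_assoc],
        Matrix.trace_mul_comm]
      simp only [Matrix.transpose_mul, Matrix.transpose_transpose, Matrix.mul_assoc]
    rw [this]; exact tr_mul_tr_self_nonneg _
  have h2' : 0 ≤ lam * (A * D * K * Dᵀ).trace := mul_nonneg hlam h2
  -- expansions
  have e0 : Y - A * B' * K = R - M := by
    rw [hR, hM, hB'eq, Matrix.mul_add, Matrix.add_mul]; abel
  have e1 : ((R - M) * (R - M)ᵀ).trace
      = (R * Rᵀ).trace - (R * Mᵀ).trace - (M * Rᵀ).trace + (M * Mᵀ).trace := by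
    simp only [Matrix.transpose_sub, Matrix.sub_mul, Matrix.mul_sub, Matrix.trace_sub]
    ring
  have e2 : (A * B' * K * B'ᵀ).trace
      = (A * B * K * Bᵀ).trace + (A * B * K * Dᵀ).trace + (A * D * K * Bᵀ).trace
        + (A * D * K * Dᵀ).trace := by
    rw [hB'eq]
    simp only [Matrix.transpose_add, Matrix.mul_add, Matrix.add_mul, Matrix.trace_add]
    ring
  rw [e0, e1, e2, hsym, hcross, habd]
  nlinarith [h1, h2', hlam, h2]
end
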